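/- For every directed set P there exists a Hausdorff topological group G (an abelian group with a topology making the group operations continuous) with identity element e such that P is Tukey equivalent to N_e, the set of all neighborhoods of e in G ordered by reverse inclusion. -/

import Mathlib

open Set Topology Cardinal

universe u

/-- A map `ψ : Q → P` is a Tukey map if the image of every unbounded set is unbounded. -/
def IsTukeyMap {Q P : Type*} [Preorder Q] [Preorder P] (ψ : Q → P) : Prop :=
  ∀ S : Set Q, ¬ BddAbove S → ¬ BddAbove (ψ '' S)

/-- `TukeyGE P Q` means `P ≥_T Q`: there is a Tukey map from `Q` to `P`. -/
def TukeyGE (P Q : Type*) [Preorder P] [Preorder Q] : Prop :=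
  ∃ ψ : Q → P, IsTukeyMap ψ

/-- Tukey equivalence of directed sets. -/
def TukeyEquiv (P Q : Type*) [Preorder P] [Preorder Q] : Prop :=
  TukeyGE P Q ∧ TukeyGE Q P

/-- The poset of all neighborhoods of a point, ordered by reverse inclusion. -/
abbrev NbhdPoset {X : Type*} [TopologicalSpace X] (x : X) :=
  ({U : Set X // U ∈ nhds x})ᵒᵈ

section Aux

variable {P : Type u} [Preorder P]

/-- The group we use: functions from `P` to `Z/2` (multiplicatively). -/
abbrev TukG (P : Type u) : Type u := P → Multiplicative (ZMod 2)

/-- The basic subgroup: functions vanishing on the down-set of `p`. -/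
def TukU (p : P) : Subgroup (TukG P) where
  carrier := {f | ∀ x, x ≤ p → f x = 1}
  one_mem' := fun _ _ => rfl
  mul_mem' := by
    intro a b ha hb x hx
    have : (a * b) x = a x * b x := rfl
    rw [this, ha x hx, hb x hx, one_mul]
  inv_mem' := by
    intro a ha x hx
    have : (a⁻¹) x = (a x)⁻¹ := rfl
    rw [this, ha x hx, inv_one]

theorem TukU_mono {p q : P} (h : p ≤ q) : (TukU q : Set (TukG P)) ⊆ TukU p :=
  fun f hf x hx => hf x (hx.trans h)

open Classical in
/-- The standard function used to separate: indicator of non-membership in down-set of `q`. -/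
noncomputable def TukInd (q : P) : TukG P :=
  fun x => if x ≤ q then 1 else Multiplicative.ofAdd (1 : ZMod 2)

theorem TukInd_mem (q : P) : TukInd q ∈ TukU q := by
  intro x hx
  simp only [TukInd]
  rw [if_pos hx]

theorem TukU_le_iff {p q : P} (h : (TukU q : Set (TukG P)) ⊆ TukU p) : p ≤ q := by
  by_contra hpq
  have := h (TukInd_mem q) p le_rfl
  simp only [TukInd] at this
  rw [if_neg hpq] at this
  have h2 : (1 : ZMod 2) = 0 := Multiplicative.ofAdd.injective this
  exact one_ne_zero h2

theorem Tuk_nonempty (hP : ∀ S : Set P, S.Finite → BddAbove S) : Nonempty P := by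
  obtain ⟨a, _⟩ := hP ∅ finite_empty
  exact ⟨a⟩

theorem Tuk_directed (hP : ∀ S : Set P, S.Finite → BddAbove S) (p q : P) : ∃ r, p ≤ r ∧ q ≤ r := by
  obtain ⟨r, hr⟩ := hP {p, q} ((finite_singleton q).insert p)
  exact ⟨r, hr (by simp), hr (by simp)⟩

/-- The group filter basis on `TukG P` given by the subgroups `TukU p`. -/
def TukB (hP : ∀ S : Set P, S.Finite → BddAbove S) : GroupFilterBasis (TukG P) where
  sets := range fun p : P => (TukU p : Set (TukG P))
  nonempty := by
    obtain ⟨p⟩ := Tuk_nonempty hP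
    exact ⟨_, ⟨p, rfl⟩⟩
  inter_sets := by
    rintro _ _ ⟨p, rfl⟩ ⟨q, rfl⟩
    obtain ⟨r, hpr, hqr⟩ := Tuk_directed hP p q
    exact ⟨_, ⟨r, rfl⟩, subset_inter (TukU_mono hpr) (TukU_mono hqr)⟩
  one' := by rintro _ ⟨p, rfl⟩; exact (TukU p).one_mem
  mul' := by
    rintro _ ⟨p, rfl⟩
    refine ⟨_, ⟨p, rfl⟩, ?_⟩
    rintro x ⟨a, ha, b, hb, rfl⟩
    exact (TukU p).mul_mem ha hb
  inv' := by
    rintro _ ⟨p, rfl⟩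
    exact ⟨_, ⟨p, rfl⟩, fun a ha => (TukU p).inv_mem ha⟩
  conj' := by
    rintro x₀ _ ⟨p, rfl⟩
    refine ⟨_, ⟨p, rfl⟩, ?_⟩
    intro a ha
    simpa [mul_comm, mul_assoc] using ha

end Aux

/-- Every directed set is Tukey equivalent to the neighborhood filter of the identity
of a Hausdorff (abelian) topological group. -/
theorem stmt2 {P : Type u} [Preorder P]
    (hP : ∀ S : Set P, S.Finite → BddAbove S) :
    ∃ (G : Type u) (t : TopologicalSpace G) (g : CommGroup G),
      letI := t
      letI := g
      IsTopologicalGroup G ∧ T2Space G ∧ TukeyEquiv P (NbhdPoset (1 : G)) := by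
  classical
  refine ⟨TukG P, (TukB hP).topology, inferInstance, ?_⟩
  letI := (TukB hP).topology
  have htg : IsTopologicalGroup (TukG P) := (TukB hP).isTopologicalGroup
  have hbasis := (TukB hP).nhds_one_hasBasis
  -- membership in nhds 1 characterization
  have hmem : ∀ V : Set (TukG P), V ∈ 𝓝 (1 : TukG P) ↔ ∃ p : P, (TukU p : Set (TukG P)) ⊆ V := by
    intro V
    rw [hbasis.mem_iff]
    constructor
    · rintro ⟨_, ⟨p, rfl⟩, h⟩; exact ⟨p, h⟩
    · rintro ⟨p, h⟩; exact ⟨_, ⟨p, rfl⟩, h⟩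
  have hUnhds : ∀ p : P, (TukU p : Set (TukG P)) ∈ 𝓝 (1 : TukG P) := fun p =>
    (hmem _).2 ⟨p, subset_rfl⟩
  have ht2 : T2Space (TukG P) := by
    apply IsTopologicalGroup.t2Space_of_one_sep
    intro x hx
    have : ∃ z, x z ≠ 1 := by
      by_contra h
      push_neg at h
      exact hx (funext h)
    obtain ⟨z, hz⟩ := this
    exact ⟨TukU z, hUnhds z, fun h => hz (h z le_rfl)⟩
  refine ⟨htg, ht2, ?_, ?_⟩
  · -- TukeyGE P (NbhdPoset 1): Tukey map ψ : NbhdPoset 1 → P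
    choose φ hφ using fun V : NbhdPoset (1 : TukG P) => (hmem V.1).1 V.2
    refine ⟨φ, fun S hS hbdd => hS ?_⟩
    obtain ⟨q, hq⟩ := hbdd
    refine ⟨⟨TukU q, hUnhds q⟩, fun V hV => ?_⟩
    -- in NbhdPoset (order dual), V ≤ U means U.1 ⊆ V.1
    have hle : φ V ≤ q := hq (mem_image_of_mem φ hV)
    show (TukU q : Set (TukG P)) ⊆ V.1
    exact (TukU_mono hle).trans (hφ V)
  · -- TukeyGE (NbhdPoset 1) P : Tukey map P → NbhdPoset 1
    refine ⟨fun p => ⟨TukU p, hUnhds p⟩, fun S hS hbdd => hS ?_⟩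
    obtain ⟨V, hV⟩ := hbdd
    obtain ⟨q, hq⟩ := (hmem V.1).1 V.2
    refine ⟨q, fun p hp => ?_⟩
    have h2 : (V.1 : Set (TukG P)) ⊆ TukU p := hV (mem_image_of_mem _ hp)
    exact TukU_le_iff (hq.trans h2)
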